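/- arXiv:2010.15917 — 3 statements merged into one kernel-verified Lean document; each statement's English description precedes it below -/
import Mathlib

section
/- For every real b ≥ 0, ∫_b^∞ y⁶·φ(y) dy ≤ 84·(1 + b⁵)·(φ(b) + Ψ(b)), where φ is the standard Gaussian density and Ψ its survival function. -/
noncomputable def phi (y : ℝ) : ℝ := (Real.sqrt (2 * Real.pi))⁻¹ * Real.exp (-y^2 / 2)
noncomputable def Psi (b : ℝ) : ℝ := ∫ y in Set.Ioi b, phi y

open Real MeasureTheory Set Filter Asymptotics Topology

lemma phi_nonneg (y : ℝ) : 0 ≤ phi y := by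
  unfold phi; positivity

lemma phi_hasDerivAt (y : ℝ) : HasDerivAt phi (phi y * (-y)) y := by
  have h1 : HasDerivAt (fun y : ℝ => -y^2/2) (-y) y := by
    have := ((hasDerivAt_pow 2 y).neg.div_const 2)
    refine this.congr_deriv ?_
    simp; ring
  have h2 := (h1.exp).const_mul ((Real.sqrt (2 * Real.pi))⁻¹)
  unfold phi
  refine h2.congr_deriv ?_
  ring

lemma G_hasDerivAt (y : ℝ) :
    HasDerivAt (fun y : ℝ => -(y^5 + 5*y^3 + 15*y) * phi y) ((y^6 - 15) * phi y) y := by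
  have hp : HasDerivAt (fun y : ℝ => -(y^5 + 5*y^3 + 15*y))
      (-(5*y^4 + 15*y^2 + 15)) y := by
    have h5 := hasDerivAt_pow 5 y
    have h3 := (hasDerivAt_pow 3 y).const_mul (5 : ℝ)
    have h1 := (hasDerivAt_id y).const_mul (15 : ℝ)
    have := ((h5.add h3).add h1).neg
    refine this.congr_deriv ?_
    simp; ring
  have := hp.mul (phi_hasDerivAt y)
  refine this.congr_deriv ?_
  ring

lemma pow_exp_integrableOn (n : ℕ) : Integrable (fun y : ℝ => y^n * Real.exp (-y^2/2)) := by
  have h := integrable_rpow_mul_exp_neg_mul_sq (b := 1/2) (by norm_num) (s := n)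
    (lt_of_lt_of_le (by norm_num) (Nat.cast_nonneg n))
  apply h.congr
  filter_upwards with y
  rw [Real.rpow_natCast]
  ring_nf

lemma phi_integrableOn (b : ℝ) : IntegrableOn phi (Ioi b) := by
  have h := pow_exp_integrableOn 0
  simp only [pow_zero, one_mul] at h
  exact ((h.const_mul ((Real.sqrt (2 * Real.pi))⁻¹)).integrableOn)

lemma pow_phi_integrableOn (n : ℕ) (b : ℝ) :
    IntegrableOn (fun y : ℝ => y^n * phi y) (Ioi b) := by
  have h := (pow_exp_integrableOn n).const_mul ((Real.sqrt (2 * Real.pi))⁻¹)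
  apply (h.integrableOn).congr_fun ?_ measurableSet_Ioi
  intro y _
  unfold phi; ring

lemma key_integral (b : ℝ) :
    ∫ y in Ioi b, (y^6 - 15) * phi y = (b^5 + 5*b^3 + 15*b) * phi b := by
  have hint : IntegrableOn (fun y : ℝ => (y^6 - 15) * phi y) (Ioi b) := by
    have := (pow_phi_integrableOn 6 b).sub ((phi_integrableOn b).const_mul 15)
    exact this.congr (Filter.Eventually.of_forall fun y => by simp only [Pi.sub_apply]; ring)
  have htend : Tendsto (fun y : ℝ => -(y^5 + 5*y^3 + 15*y) * phi y) atTop (𝓝 0) := by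
    have T6 : Tendsto (fun y : ℝ => y^(6:ℝ) * Real.exp (-(1/2) * y^2)) atTop (𝓝 0) := by
      refine ((rpow_mul_exp_neg_mul_sq_isLittleO_exp_neg (by norm_num) 6).isBigO.trans_tendsto
        ?_)
      have hm : Tendsto (fun x : ℝ => x * (1/2)) atTop atTop :=
        tendsto_id.atTop_mul_const (by norm_num)
      have := tendsto_exp_neg_atTop_nhds_zero.comp hm
      exact this.congr (fun x => by simp [Function.comp]; ring_nf)
    have T := T6.const_mul (21 * (Real.sqrt (2 * Real.pi))⁻¹)
    rw [mul_zero] at T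
    apply squeeze_zero_norm' ?_ T
    filter_upwards [eventually_ge_atTop (1:ℝ)] with y hy
    have hy0 : (0:ℝ) ≤ y := by linarith
    have hphi : phi y = (Real.sqrt (2 * Real.pi))⁻¹ * Real.exp (-(1/2) * y^2) := by
      unfold phi; ring_nf
    have hrp : y^(6:ℝ) = y^(6:ℕ) := by
      rw [← Real.rpow_natCast y 6]; norm_num
    rw [norm_mul, norm_neg, Real.norm_eq_abs, Real.norm_eq_abs, hphi, hrp,
      abs_of_nonneg (by positivity : (0:ℝ) ≤ (Real.sqrt (2 * Real.pi))⁻¹ * Real.exp (-(1/2) * y^2)),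
      abs_of_nonneg (by positivity : (0:ℝ) ≤ y^5 + 5*y^3 + 15*y)]
    have hb : y^5 + 5*y^3 + 15*y ≤ 21 * y^6 := by nlinarith [pow_le_pow_right₀ hy (by norm_num : 3 ≤ 5), pow_le_pow_right₀ hy (by norm_num : 1 ≤ 5), pow_le_pow_right₀ hy (by norm_num : 5 ≤ 6)]
    have he : (0:ℝ) < Real.exp (-(1/2) * y^2) := Real.exp_pos _
    have hc : (0:ℝ) ≤ (Real.sqrt (2 * Real.pi))⁻¹ := by positivity
    calc (y^5 + 5*y^3 + 15*y) * ((Real.sqrt (2 * Real.pi))⁻¹ * Real.exp (-(1/2) * y^2))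
        ≤ 21 * y^6 * ((Real.sqrt (2 * Real.pi))⁻¹ * Real.exp (-(1/2) * y^2)) := by
          apply mul_le_mul_of_nonneg_right hb (by positivity)
      _ = 21 * (Real.sqrt (2 * Real.pi))⁻¹ * (y^(6:ℕ) * Real.exp (-(1/2) * y^2)) := by ring
  have := integral_Ioi_of_hasDerivAt_of_tendsto
    ((G_hasDerivAt b).continuousAt.continuousWithinAt)
    (fun x _ => G_hasDerivAt x) hint htend
  rw [this]; ring

theorem stmt_15 (b : ℝ) (hb : 0 ≤ b) :
    ∫ y in Set.Ioi b, y^6 * phi y ≤ 84 * (1 + b^5) * (phi b + Psi b) := by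
  have hsplit : ∫ y in Set.Ioi b, y^6 * phi y
      = (b^5 + 5*b^3 + 15*b) * phi b + 15 * Psi b := by
    have heq : ∀ y : ℝ, y^6 * phi y = (y^6 - 15) * phi y + 15 * phi y := by
      intro y; ring
    have hint1 : IntegrableOn (fun y : ℝ => (y^6 - 15) * phi y) (Ioi b) := by
      have := (pow_phi_integrableOn 6 b).sub ((phi_integrableOn b).const_mul 15)
      exact this.congr (Filter.Eventually.of_forall fun y => by simp only [Pi.sub_apply]; ring)
    have hint2 : IntegrableOn (fun y : ℝ => 15 * phi y) (Ioi b) :=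
      (phi_integrableOn b).const_mul 15
    calc ∫ y in Set.Ioi b, y^6 * phi y
        = ∫ y in Set.Ioi b, ((y^6 - 15) * phi y + 15 * phi y) := by
          apply setIntegral_congr_fun measurableSet_Ioi
          intro y _; exact heq y
      _ = (∫ y in Set.Ioi b, (y^6 - 15) * phi y) + ∫ y in Set.Ioi b, 15 * phi y :=
          integral_add hint1 hint2
      _ = (b^5 + 5*b^3 + 15*b) * phi b + 15 * Psi b := by
          rw [key_integral b, integral_const_mul]; rfl
  rw [hsplit]
  have hphi : 0 ≤ phi b := phi_nonneg b
  have hPsi : 0 ≤ Psi b := setIntegral_nonneg measurableSet_Ioi (fun y _ => phi_nonneg y)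
  nlinarith [mul_nonneg hphi (mul_nonneg hb (sq_nonneg (b^2 - 1))),
    mul_nonneg hphi (sq_nonneg (b^2 - 1)), mul_nonneg hPsi (pow_nonneg hb 5),
    mul_nonneg hphi (pow_nonneg hb 5), mul_nonneg hphi hb,
    mul_nonneg hphi (mul_nonneg (mul_nonneg hb hb) (sq_nonneg (b^2-1)))]
end

section
/- Fix an integer m ≥ 2 and let T : ℝ → ℝ be defined by T(s) = (1 − 1/(12m))·s + s³/(3m²). Then T is strictly increasing on ℝ, and for every real z̃ with |z̃| ≤ √(m·log m) and m ≥ 1000, the unique real s with T(s) = z̃ satisfies |s − (z̃ + z̃/(12m) − z̃³/(3m²))| ≤ (m²·|z̃| + m·|z̃|³ + |z̃|⁵)/(3m⁴). -/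
lemma auxG (w z ε δ : ℝ) (hw : 0 < w) (hw1 : w ≤ 1/1000) (hz : 0 ≤ z) (h15 : w^2*z^2 ≤ 1/15)
    (hε : ε = w^2/3*(z + w*z^3 + w^2*z^5)) (hδ : δ = w*z/12 - w^2*z^3/3 + ε) :
    z ≤ (1 - w/12) * ((z + w*z/12 - w^2*z^3/3) + ε)
      + (w^2/3)*((z + w*z/12 - w^2*z^3/3) + ε)^3 := by
  have hεnn : 0 ≤ ε := by
    rw [hε]; positivity
  have hδ3z : 0 ≤ 3*z + δ := by
    rw [hδ]
    nlinarith [mul_nonneg hw.le hz, mul_nonneg (sub_nonneg.2 h15) hz]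
  have p3 : 0 ≤ (w^2/3)*δ^2*(3*z+δ) :=
    mul_nonneg (mul_nonneg (by positivity) (sq_nonneg δ)) hδ3z
  have p1 : 0 ≤ (1-w/12)*(w^2/3)*z - (w/12)^2*z := by
    nlinarith [mul_nonneg (mul_nonneg hw.le hw.le) hz]
  have p2 : 0 ≤ 4*(w^2/3)*(w/12)*z^3 - (w/12)*(w^2/3)*w^2*z^5 := by
    nlinarith [mul_nonneg (mul_nonneg (by positivity : (0:ℝ) ≤ w^3) (pow_nonneg hz 3))
      (sub_nonneg.2 h15), mul_nonneg (by positivity : (0:ℝ) ≤ w^3) (pow_nonneg hz 3)]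
  have p4 : 0 ≤ (1-w/12)*(w^2/3)*w*z^3 := by
    have h1 : (0:ℝ) ≤ 1 - w/12 := by linarith
    positivity
  have p5 : 0 ≤ 3*(w^2/3)*z^2*ε := by positivity
  have key : (1 - w/12) * ((z + w*z/12 - w^2*z^3/3) + ε)
      + (w^2/3)*((z + w*z/12 - w^2*z^3/3) + ε)^3 - z
      = ((1-w/12)*(w^2/3)*z - (w/12)^2*z) + (1-w/12)*(w^2/3)*w*z^3
        + (4*(w^2/3)*(w/12)*z^3 - (w/12)*(w^2/3)*w^2*z^5)
        + 3*(w^2/3)*z^2*ε + (w^2/3)*δ^2*(3*z+δ) := by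
    rw [hδ, hε]; ring
  linarith [key, p1, p2, p3, p4, p5]

set_option maxHeartbeats 1000000 in

lemma auxH (w z ε δ : ℝ) (hw : 0 < w) (hw1 : w ≤ 1/1000) (hz : 0 ≤ z) (h15 : w^2*z^2 ≤ 1/15)
    (hε : ε = w^2/3*(z + w*z^3 + w^2*z^5)) (hδ : δ = w*z/12 - w^2*z^3/3 - ε) :
    (1 - w/12) * ((z + w*z/12 - w^2*z^3/3) - ε)
      + (w^2/3)*((z + w*z/12 - w^2*z^3/3) - ε)^3 ≤ z := by
  have hεnn : 0 ≤ ε := by rw [hε]; positivity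
  have hεz : ε ≤ z/4 := by
    rw [hε]
    nlinarith [mul_nonneg (sub_nonneg.2 h15) (mul_nonneg hw.le hz),
      mul_nonneg (mul_nonneg (sub_nonneg.2 h15) (by positivity : (0:ℝ) ≤ w^2*z^2)) hz,
      mul_nonneg (sub_nonneg.2 h15) hz, mul_nonneg hw.le hz,
      mul_nonneg (mul_nonneg hw.le hw.le) hz]
  have hδz : δ ≤ z := by
    rw [hδ]
    nlinarith [mul_nonneg hw.le hz, mul_nonneg (mul_nonneg hw.le hw.le) (pow_nonneg hz 3)]
  -- c1 : (w^2/3)*δ^2*(3*z+δ) ≤ 4*(w^2/3)*z*δ^2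
  have c1 : (w^2/3)*δ^2*(3*z+δ) ≤ 4*(w^2/3)*z*δ^2 := by
    nlinarith [mul_nonneg (mul_nonneg (by positivity : (0:ℝ) ≤ w^2/3) (sq_nonneg δ))
      (sub_nonneg.2 hδz)]
  have c3 : 4*(w^2/3)*z*δ^2 ≤ 12*(w^2/3)*z*((w*z/12)^2 + (w^2*z^3/3)^2 + ε^2) := by
    have c2 : δ^2 ≤ 3*((w*z/12)^2 + (w^2*z^3/3)^2 + ε^2) := by
      rw [hδ]
      nlinarith [sq_nonneg (w*z/12 + w^2*z^3/3), sq_nonneg (w*z/12 + ε),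
        sq_nonneg (w^2*z^3/3 - ε)]
    nlinarith [mul_le_mul_of_nonneg_left c2 (by positivity : (0:ℝ) ≤ 4*(w^2/3)*z)]
  have c4 : 12*(w^2/3)*z*(w*z/12)^2 ≤ (1/3)*(1-w/12)*(w^2/3)*w*z^3 := by
    nlinarith [mul_nonneg (mul_nonneg (by positivity : (0:ℝ) ≤ w^3) (pow_nonneg hz 3))
      (by linarith : (0:ℝ) ≤ 1/1000 - w), mul_nonneg (by positivity : (0:ℝ) ≤ w^4)
      (pow_nonneg hz 3)]
  have c5 : 12*(w^2/3)*z*(w^2*z^3/3)^2 ≤ 3*(w^2/3)^2*z^5 := by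
    linarith [mul_nonneg (sub_nonneg.2 h15) (mul_nonneg (by positivity : (0:ℝ) ≤ w^4)
      (pow_nonneg hz 5)), mul_nonneg (by positivity : (0:ℝ) ≤ w^4) (pow_nonneg hz 5)]
  have c6 : 12*(w^2/3)*z*ε^2 ≤ 3*(w^2/3)*z^2*ε := by
    nlinarith [mul_nonneg (mul_nonneg (mul_nonneg (by positivity : (0:ℝ) ≤ w^2/3) hz) hεnn)
      (by linarith : 0 ≤ z/4 - ε)]
  have q1 : 4*(w^2/3)*(w/12)*z^3 ≤ (2/3)*(1-w/12)*(w^2/3)*w*z^3 := by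
    nlinarith [mul_nonneg (mul_nonneg (by positivity : (0:ℝ) ≤ w^3) (pow_nonneg hz 3))
      (by linarith : (0:ℝ) ≤ 1/1000 - w)]
  have c7 : (1-w/12)*((w^2/3)*w*z^3) ≤ (1-w/12)*ε := by
    apply mul_le_mul_of_nonneg_left _ (by linarith : (0:ℝ) ≤ 1 - w/12)
    rw [hε]
    nlinarith [mul_nonneg (mul_nonneg hw.le hw.le) hz,
      mul_nonneg (by positivity : (0:ℝ) ≤ w^4) (pow_nonneg hz 5)]
  have hu2 : 0 ≤ (w/12)^2*z := by positivity
  have key : (1 - w/12) * ((z + w*z/12 - w^2*z^3/3) - ε)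
      + (w^2/3)*((z + w*z/12 - w^2*z^3/3) - ε)^3 - z
      = -((w/12)^2*z) + 4*(w^2/3)*(w/12)*z^3 - 3*(w^2/3)^2*z^5
        - (1-w/12)*ε - 3*(w^2/3)*z^2*ε + (w^2/3)*δ^2*(3*z+δ) := by
    rw [hδ, hε]; ring
  linarith [key, c1, c3, c4, c5, c6, q1, c7, hu2]


lemma mono17 (M : ℝ) (hM : 2 ≤ M) :
    StrictMono (fun s : ℝ => (1 - 1/(12*M)) * s + s^3/(3*M^2)) := by
  have hMpos : (0:ℝ) < M := by linarith
  have hc : 0 < 1 - 1/(12*M) := by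
    have h1 : 1/(12*M) ≤ 1/24 := by
      apply one_div_le_one_div_of_le <;> linarith
    linarith
  have hk : (0:ℝ) < 3*M^2 := by positivity
  intro a b hab
  simp only
  have hcube : a^3 < b^3 := by
    nlinarith [pow_pos (sub_pos.2 hab) 3, mul_nonneg (sub_pos.2 hab).le (sq_nonneg (a+b))]
  have h1 : (1 - 1/(12*M)) * a < (1 - 1/(12*M)) * b := (mul_lt_mul_iff_right₀ hc).2 hab
  have h2 : a^3/(3*M^2) < b^3/(3*M^2) := by gcongr
  linarith

lemma main_nonneg (M z s : ℝ) (hM : 1000 ≤ M) (hz : 0 ≤ z) (h15 : z^2 ≤ M^2/15)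
    (hs : (1 - 1/(12*M)) * s + s^3/(3*M^2) = z) :
    |s - (z + z/(12*M) - z^3/(3*M^2))| ≤ (M^2*z + M*z^3 + z^5)/(3*M^4) := by
  have hMpos : (0:ℝ) < M := by linarith
  set w : ℝ := 1/M with hw_def
  have hw : 0 < w := by positivity
  have hw1 : w ≤ 1/1000 := by
    rw [hw_def]; apply one_div_le_one_div_of_le <;> linarith
  have hww : w^2*z^2 ≤ 1/15 := by
    rw [hw_def]
    rw [div_pow, one_pow, div_mul_eq_mul_div, one_mul, div_le_iff₀ (by positivity)]
    nlinarith
  set ε : ℝ := (M^2*z + M*z^3 + z^5)/(3*M^4) with hε_def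
  have hε : ε = w^2/3*(z + w*z^3 + w^2*z^5) := by
    rw [hε_def, hw_def]; field_simp
  set s₀ : ℝ := z + z/(12*M) - z^3/(3*M^2) with hs₀_def
  have hs₀ : s₀ = z + w*z/12 - w^2*z^3/3 := by
    rw [hs₀_def, hw_def]; field_simp
  have hTeq : ∀ x : ℝ, (1 - 1/(12*M)) * x + x^3/(3*M^2) = (1 - w/12) * x + (w^2/3)*x^3 := by
    intro x; rw [hw_def]; field_simp
  have hG : z ≤ (1 - 1/(12*M)) * (s₀ + ε) + (s₀ + ε)^3/(3*M^2) := by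
    rw [hTeq, hs₀]
    exact auxG w z ε _ hw hw1 hz hww hε rfl
  have hH : (1 - 1/(12*M)) * (s₀ - ε) + (s₀ - ε)^3/(3*M^2) ≤ z := by
    rw [hTeq, hs₀]
    exact auxH w z ε _ hw hw1 hz hww hε rfl
  have SM := mono17 M (by linarith)
  have h1 : s ≤ s₀ + ε := SM.le_iff_le.1 (show (1 - 1/(12*M)) * s + s^3/(3*M^2)
    ≤ (1 - 1/(12*M)) * (s₀+ε) + (s₀+ε)^3/(3*M^2) by rw [hs]; exact hG)
  have h2 : s₀ - ε ≤ s := SM.le_iff_le.1 (show (1 - 1/(12*M)) * (s₀-ε) + (s₀-ε)^3/(3*M^2)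
    ≤ (1 - 1/(12*M)) * s + s^3/(3*M^2) by rw [hs]; exact hH)
  rw [abs_le]
  constructor <;> linarith

theorem stmt_17 (m : ℕ) (hm : 2 ≤ m) :
    StrictMono (fun s : ℝ => (1 - 1/(12*(m:ℝ))) * s + s^3/(3*(m:ℝ)^2)) ∧
    ∀ ztil : ℝ, |ztil| ≤ Real.sqrt (m * Real.log m) → 1000 ≤ m →
      ∀ s : ℝ, (1 - 1/(12*(m:ℝ))) * s + s^3/(3*(m:ℝ)^2) = ztil →
        |s - (ztil + ztil/(12*(m:ℝ)) - ztil^3/(3*(m:ℝ)^2))| ≤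
          ((m:ℝ)^2 * |ztil| + (m:ℝ) * |ztil|^3 + |ztil|^5) / (3*(m:ℝ)^4) := by
  have hm2 : (2:ℝ) ≤ (m:ℝ) := by exact_mod_cast hm
  refine ⟨mono17 (m:ℝ) hm2, ?_⟩
  intro z hzt hm1000 s hs
  set M : ℝ := (m:ℝ) with hM_def
  have hM : (1000:ℝ) ≤ M := by rw [hM_def]; exact_mod_cast hm1000
  have hMpos : (0:ℝ) < M := by linarith
  -- z^2 ≤ M^2/15
  have hlog0 : 0 ≤ Real.log M := Real.log_nonneg (by linarith)
  have hzsq : z^2 ≤ M * Real.log M := by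
    have h1 : |z|^2 ≤ Real.sqrt (M * Real.log M)^2 := by
      apply pow_le_pow_left₀ (abs_nonneg z) hzt
    rwa [sq_abs, Real.sq_sqrt (by positivity)] at h1
  have hsqrt30 : (30:ℝ) ≤ Real.sqrt M := by
    have : Real.sqrt 900 ≤ Real.sqrt M := Real.sqrt_le_sqrt (by linarith)
    rwa [show (900:ℝ) = 30^2 by norm_num, Real.sqrt_sq (by norm_num)] at this
  have hlogle : Real.log M ≤ M/15 := by
    have h1 : Real.log (Real.sqrt M) ≤ Real.sqrt M - 1 :=
      Real.log_le_sub_one_of_pos (by positivity)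
    have h2 : Real.log M = 2 * Real.log (Real.sqrt M) := by
      rw [Real.log_sqrt hMpos.le]; ring
    have h3 : Real.sqrt M ≤ M/30 := by
      nlinarith [Real.sq_sqrt hMpos.le, Real.sqrt_nonneg M]
    linarith
  have h15 : z^2 ≤ M^2/15 := by nlinarith
  rcases le_or_gt 0 z with hz | hz
  · rw [abs_of_nonneg hz]
    exact main_nonneg M z s hM hz h15 hs
  · rw [abs_of_neg hz]
    have hs' : (1 - 1/(12*M)) * (-s) + (-s)^3/(3*M^2) = -z := by
      rw [← hs]; ring
    have h := main_nonneg M (-z) (-s) hM (by linarith) (by nlinarith) hs'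
    have e1 : (-s) - ((-z) + (-z)/(12*M) - (-z)^3/(3*M^2))
        = -(s - (z + z/(12*M) - z^3/(3*M^2))) := by ring
    rw [e1, abs_neg] at h
    refine h.trans_eq ?_
    ring
end

section
/- For every positive integer n, n! = √(2π)·exp((n + 1/2)·log n − n + 1/(12n) + λ_n) for some real λ_n with |λ_n| ≤ 1/(360·n³). -/
open scoped Topology
open Stirling Real Filter Nat Finset

noncomputable def sSeq (n : ℕ) : ℝ := Real.log (Stirling.stirlingSeq n)

lemma diff_upper (m : ℕ) :
    sSeq (m + 1) - sSeq (m + 2) ≤ 1 / (12 * ((m:ℝ) + 1) * ((m:ℝ) + 2)) := by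
  set y : ℝ := ((1 : ℝ) / (2 * (↑(m + 1) : ℝ) + 1)) ^ 2 with hy
  have hy0 : (0 : ℝ) ≤ y := sq_nonneg _
  have hy1 : y < 1 := by
    rw [hy, div_pow, one_pow, div_lt_one (by positivity)]
    push_cast
    nlinarith [Nat.cast_nonneg (α := ℝ) m]
  have g : HasSum (fun k : ℕ => (1/3 : ℝ) * y ^ (k + 1)) ((1/3) * y * (1 - y)⁻¹) := by
    have h := (hasSum_geometric_of_lt_one hy0 hy1).mul_left ((1/3 : ℝ) * y)
    have hfun : (fun k : ℕ => (1/3 : ℝ) * y ^ (k + 1)) = fun k : ℕ => (1/3 : ℝ) * y * y ^ k := by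
      funext k; ring
    rw [hfun]; exact h
  have hab : ∀ k : ℕ, (1 : ℝ) / (2 * ↑(k + 1) + 1) * y ^ (k + 1) ≤ (1/3 : ℝ) * y ^ (k + 1) := by
    intro k
    have h1 : (1 : ℝ) / (2 * ↑(k + 1) + 1) ≤ 1/3 := by
      rw [div_le_div_iff₀ (by positivity) (by norm_num)]
      push_cast; nlinarith [Nat.cast_nonneg (α := ℝ) k]
    exact mul_le_mul_of_nonneg_right h1 (pow_nonneg hy0 _)
  have key := hasSum_le hab (Stirling.log_stirlingSeq_diff_hasSum m) g
  have heq : (1/3 : ℝ) * y * (1 - y)⁻¹ = 1 / (12 * ((m:ℝ) + 1) * ((m:ℝ) + 2)) := by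
    rw [hy]
    have h2 : (2 * ((↑(m + 1)) : ℝ) + 1) = 2 * (m:ℝ) + 3 := by push_cast; ring
    rw [h2]
    have h3 : (2 * (m:ℝ) + 3) ≠ 0 := by positivity
    have h4 : (1:ℝ) - (1 / (2 * (m:ℝ) + 3)) ^ 2 = ((2*(m:ℝ)+3)^2 - 1)/(2*(m:ℝ)+3)^2 := by
      field_simp
    rw [h4]
    have h5 : (2*(m:ℝ)+3)^2 - 1 = 4*((m:ℝ)+1)*((m:ℝ)+2) := by ring
    rw [h5, div_pow, one_pow]
    have hA : ((m:ℝ)+1) ≠ 0 := by positivity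
    have hB : ((m:ℝ)+2) ≠ 0 := by positivity
    field_simp
    ring
  rw [heq] at key
  exact key

lemma diff_lower (m : ℕ) :
    1 / (3 * (2*(m:ℝ)+3)^2) + 1 / (5 * (2*(m:ℝ)+3)^4) ≤ sSeq (m + 1) - sSeq (m + 2) := by
  set y : ℝ := ((1 : ℝ) / (2 * (↑(m + 1) : ℝ) + 1)) ^ 2 with hy
  have h := Stirling.log_stirlingSeq_diff_hasSum m
  have hle := sum_le_hasSum (Finset.range 2) (fun k _ => by positivity) h
  have hsum : ∑ k ∈ Finset.range 2,
      (1 : ℝ) / (2 * ↑(k + 1) + 1) * y ^ (k + 1)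
      = 1 / (3 * (2*(m:ℝ)+3)^2) + 1 / (5 * (2*(m:ℝ)+3)^4) := by
    rw [Finset.sum_range_succ, Finset.sum_range_one]
    rw [hy]
    have h2 : (2 * ((↑(m + 1)) : ℝ) + 1) = 2 * (m:ℝ) + 3 := by push_cast; ring
    rw [h2]
    have h3 : (2 * (m:ℝ) + 3) ≠ 0 := by positivity
    norm_num
    field_simp
  rw [hsum] at hle
  exact hle

-- the polynomial inequality
lemma ineqB (N : ℝ) (hN : 1 ≤ N) :
    1/(12*N*(N+1)) - 1/(360*N^3) + 1/(360*(N+1)^3)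
      ≤ 1/(3*(2*N+1)^2) + 1/(5*(2*N+1)^4) := by
  have h0 : (0:ℝ) < N := by linarith
  have h1 : (0:ℝ) < N + 1 := by linarith
  have h2 : (0:ℝ) < 2*N + 1 := by linarith
  have e1 : 1/(12*N*(N+1)) - 1/(360*N^3) + 1/(360*(N+1)^3)
      = (30*N^2*(N+1)^2 - (N+1)^3 + N^3) / (360*N^3*(N+1)^3) := by
    field_simp
    ring
  have e2 : 1/(3*(2*N+1)^2) + 1/(5*(2*N+1)^4)
      = (5*(2*N+1)^2 + 3) / (15*(2*N+1)^4) := by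
    field_simp
    ring
  rw [e1, e2, div_le_div_iff₀ (by positivity) (by positivity)]
  nlinarith [pow_pos h0 2, pow_pos h0 3, pow_pos h0 4, pow_pos h0 5, pow_pos h0 6,
    pow_pos h0 7, pow_pos h0 8]

noncomputable def Fse (m : ℕ) : ℝ := sSeq (m+1) - 1/(12*((m:ℝ)+1))
noncomputable def Gse (m : ℕ) : ℝ := Fse m + 1/(360*((m:ℝ)+1)^3)

lemma F_mono : Monotone Fse := by
  apply monotone_nat_of_le_succ
  intro m
  have h := diff_upper m
  unfold Fse
  push_cast
  have hid : 1/(12*((m:ℝ)+1)) - 1/(12*((m:ℝ)+2)) = 1/(12*((m:ℝ)+1)*((m:ℝ)+2)) := by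
    have hA : ((m:ℝ)+1) ≠ 0 := by positivity
    have hB : ((m:ℝ)+2) ≠ 0 := by positivity
    field_simp
    ring
  have h2 : (((m:ℕ):ℝ)+1+1) = ((m:ℝ)+2) := by ring
  rw [h2]
  linarith

lemma G_anti : Antitone Gse := by
  apply antitone_nat_of_succ_le
  intro m
  have h := diff_lower m
  have hB := ineqB ((m:ℝ)+1) (by linarith [Nat.cast_nonneg (α := ℝ) m])
  have e1 : 2*((m:ℝ)+1)+1 = 2*(m:ℝ)+3 := by ring
  have e2 : ((m:ℝ)+1)+1 = (m:ℝ)+2 := by ring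
  rw [e1, e2] at hB
  have hid : 1/(12*((m:ℝ)+1)*((m:ℝ)+2)) = 1/(12*((m:ℝ)+1)) - 1/(12*((m:ℝ)+2)) := by
    have hA : ((m:ℝ)+1) ≠ 0 := by positivity
    have hBn : ((m:ℝ)+2) ≠ 0 := by positivity
    field_simp
    ring
  rw [hid] at hB
  unfold Gse Fse
  push_cast
  have h2 : (((m:ℕ):ℝ)+1+1) = ((m:ℝ)+2) := by ring
  rw [h2]
  linarith

lemma F_tendsto : Tendsto Fse atTop (𝓝 (Real.log (Real.sqrt Real.pi))) := by
  have h1 : Tendsto (fun m : ℕ => sSeq (m+1)) atTop (𝓝 (Real.log (Real.sqrt Real.pi))) := by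
    have hs := Stirling.tendsto_stirlingSeq_sqrt_pi
    have hl : Tendsto (fun n : ℕ => Real.log (stirlingSeq n)) atTop
        (𝓝 (Real.log (Real.sqrt Real.pi))) :=
      hs.log (by positivity)
    exact hl.comp (tendsto_add_atTop_nat 1)
  have hnat : Tendsto (fun m : ℕ => ((m:ℝ)+1)) atTop atTop :=
    tendsto_atTop_add_const_right atTop 1 tendsto_natCast_atTop_atTop
  have h2 : Tendsto (fun m : ℕ => 1/(12*((m:ℝ)+1))) atTop (𝓝 0) := by
    simp only [one_div]
    exact (hnat.const_mul_atTop (by norm_num : (0:ℝ) < 12)).inv_tendsto_atTop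
  have := h1.sub h2
  rw [sub_zero] at this
  exact this

lemma G_tendsto : Tendsto Gse atTop (𝓝 (Real.log (Real.sqrt Real.pi))) := by
  have hnat : Tendsto (fun m : ℕ => ((m:ℝ)+1)) atTop atTop :=
    tendsto_atTop_add_const_right atTop 1 tendsto_natCast_atTop_atTop
  have hcube : Tendsto (fun m : ℕ => ((m:ℝ)+1)^3) atTop atTop :=
    (tendsto_pow_atTop (by norm_num : 3 ≠ 0)).comp hnat
  have h3 : Tendsto (fun m : ℕ => 1/(360*((m:ℝ)+1)^3)) atTop (𝓝 0) := by
    simp only [one_div]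
    exact (hcube.const_mul_atTop (by norm_num : (0:ℝ) < 360)).inv_tendsto_atTop
  have := F_tendsto.add h3
  rw [add_zero] at this
  exact this

lemma F_le : ∀ m, Fse m ≤ Real.log (Real.sqrt Real.pi) :=
  fun m => F_mono.ge_of_tendsto F_tendsto m

lemma le_G : ∀ m, Real.log (Real.sqrt Real.pi) ≤ Gse m :=
  fun m => G_anti.le_of_tendsto G_tendsto m

theorem stmt_19 (n : ℕ) (hn : 0 < n) :
    ∃ lam : ℝ, |lam| ≤ 1 / (360 * (n:ℝ)^3) ∧
      (n.factorial : ℝ) = Real.sqrt (2 * Real.pi) *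
        Real.exp (((n:ℝ) + 1/2) * Real.log n - n + 1/(12*(n:ℝ)) + lam) := by
  obtain ⟨m, rfl⟩ : ∃ m, n = m+1 := ⟨n-1, (Nat.succ_pred_eq_of_pos hn).symm⟩
  set L := Real.log (Real.sqrt Real.pi) with hL
  refine ⟨Fse m - L, ?_, ?_⟩
  · have h1 := F_le m
    have h2 := le_G m
    unfold Gse at h2
    rw [abs_le]
    push_cast
    constructor <;> linarith
  · set N : ℝ := ((m+1 : ℕ) : ℝ) with hN
    have hN1 : N = (m:ℝ)+1 := by rw [hN]; push_cast; ring
    have hNpos : 0 < N := by rw [hN1]; positivity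
    have hsqrt : (0:ℝ) < Real.sqrt (2 * Real.pi) := by positivity
    rw [← Real.exp_log hsqrt, ← Real.exp_add]
    have hlog2pi : Real.log (Real.sqrt (2 * Real.pi)) = 1/2 * (Real.log 2 + Real.log Real.pi) := by
      rw [Real.log_sqrt (by positivity), Real.log_mul two_ne_zero Real.pi_ne_zero]
      ring
    have hLpi : L = 1/2 * Real.log Real.pi := by
      rw [hL, Real.log_sqrt Real.pi_pos.le]; ring
    have hform := Stirling.log_stirlingSeq_formula (m+1)
    have hs : sSeq (m+1) = Real.log ((m+1).factorial : ℝ)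
        - 1/2 * Real.log 2 - 1/2 * Real.log N - N * Real.log N + N := by
      rw [sSeq, hform]
      rw [Real.log_mul two_ne_zero (by positivity : N ≠ 0),
        Real.log_div (by positivity : N ≠ 0) (Real.exp_ne_zero 1), Real.log_exp]
      ring
    have hexp : Real.log (Real.sqrt (2 * Real.pi)) +
        ((N + 1/2) * Real.log N - N + 1/(12*N) + (Fse m - L))
        = Real.log ((m+1).factorial : ℝ) := by
      unfold Fse
      rw [hlog2pi, hLpi, hs, hN1]
      ring
    rw [hexp, Real.exp_log (by positivity)]
end
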